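/- For a distribution F on [0,∞) with monotone hazard rate, the revenue-maximizing posted price p* (satisfying p* = (1−F(p*))/f(p*)) has probability of sale at least 1/e, i.e., 1 − F(p*) ≥ 1/e. -/

import Mathlib

/-- For an MHR distribution on `[0,∞)`, the revenue-maximizing posted price `p*`
(characterized by `p* = (1 − F(p*))/f(p*)`) sells with probability at least `1/e`. -/
theorem myerson_price_sale_probability
    (F f : ℝ → ℝ) (pstar : ℝ)
    (hF0 : F 0 = 0) (hF1 : ∀ x : ℝ, F x ≤ 1)
    (hF' : ∀ x : ℝ, 0 ≤ x → HasDerivAt F (f x) x)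
    (hfpos : ∀ x : ℝ, 0 ≤ x → 0 < f x)
    (hMHR : MonotoneOn (fun x => f x / (1 - F x)) (Set.Ici 0))
    (hpstar : 0 ≤ pstar)
    (hopt : IsMaxOn (fun p => p * (1 - F p)) (Set.Ici 0) pstar)
    (hfoc : pstar = (1 - F pstar) / f pstar) :
    1 / Real.exp 1 ≤ 1 - F pstar := by
  rcases eq_or_lt_of_le hpstar with h0 | hp
  · have h1 : (1:ℝ)/Real.exp 1 ≤ 1 := by
      rw [div_le_one (Real.exp_pos 1)]
      exact Real.one_le_exp (by norm_num)
    rw [← h0, hF0]; linarith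
  · have hfp := hfpos pstar hpstar
    have hSpos : 0 < 1 - F pstar := by
      by_contra h
      push_neg at h
      have : pstar ≤ 0 := by
        rw [hfoc]; exact div_nonpos_of_nonpos_of_nonneg h hfp.le
      linarith
    have hkey : pstar * f pstar = 1 - F pstar := by
      rw [eq_div_iff hfp.ne'] at hfoc
      exact hfoc
    -- F is monotone on [0, ∞)
    have hFcont : ContinuousOn F (Set.Ici 0) :=
      fun x hx => ((hF' x hx).continuousAt).continuousWithinAt
    have hmono : MonotoneOn F (Set.Ici 0) := by
      apply monotoneOn_of_deriv_nonneg (convex_Ici 0) hFcont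
      · intro x hx
        rw [interior_Ici] at hx
        exact ((hF' x hx.le).differentiableAt).differentiableWithinAt
      · intro x hx
        rw [interior_Ici] at hx
        rw [(hF' x hx.le).deriv]
        exact (hfpos x hx.le).le
    have hlt1 : ∀ x ∈ Set.Icc 0 pstar, 0 < 1 - F x := by
      intro x hx
      have := hmono hx.1 (Set.mem_Ici.mpr hpstar) hx.2
      linarith
    -- MVT for G = log (1 - F)
    set G : ℝ → ℝ := fun x => Real.log (1 - F x) with hG
    have hGcont : ContinuousOn G (Set.Icc 0 pstar) := by
      intro x hx
      have h1 : ContinuousAt (fun y => 1 - F y) x :=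
        continuousAt_const.sub ((hF' x hx.1).continuousAt)
      exact (h1.log (hlt1 x hx).ne').continuousWithinAt
    have hGderiv : ∀ x ∈ Set.Ioo 0 pstar, HasDerivAt G (-(f x / (1 - F x))) x := by
      intro x hx
      have hxmem : x ∈ Set.Icc 0 pstar := ⟨hx.1.le, hx.2.le⟩
      have h1 : HasDerivAt (fun y => 1 - F y) (-(f x)) x := by
        simpa using (hF' x hx.1.le).const_sub 1
      have := h1.log (hlt1 x hxmem).ne'
      simpa [neg_div] using this
    obtain ⟨c, hc, hceq⟩ := exists_hasDerivAt_eq_slope G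
      (fun x => -(f x / (1 - F x))) hp hGcont hGderiv
    have hG0 : G 0 = 0 := by simp [hG, hF0]
    have hhaz : f c / (1 - F c) ≤ f pstar / (1 - F pstar) :=
      hMHR (Set.mem_Ici.mpr hc.1.le) (Set.mem_Ici.mpr hpstar) hc.2.le
    have hhp : f pstar / (1 - F pstar) = 1 / pstar := by
      rw [← hkey]
      field_simp
    have hslope : -(f c / (1 - F c)) = G pstar / pstar := by
      rw [hceq, hG0]; ring_nf
    have hlog : -1 ≤ G pstar := by
      have h1 : -(1/pstar) ≤ G pstar / pstar := by
        rw [← hslope]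
        have := hhaz.trans_eq hhp
        linarith
      calc (-1 : ℝ) = -(1/pstar) * pstar := by field_simp
        _ ≤ G pstar / pstar * pstar := by
            exact mul_le_mul_of_nonneg_right h1 hp.le
        _ = G pstar := by field_simp
    have : Real.exp (-1) ≤ Real.exp (G pstar) := Real.exp_le_exp.mpr hlog
    rw [hG, Real.exp_log hSpos] at this
    rw [Real.exp_neg] at this
    rw [one_div]
    exact this
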